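/- The curve σ(s) = (s, cosh s)/(s² + cosh² s), s ∈ ℝ (the image of s ↦ (s, cosh s) under inversion at the unit circle), takes values in the hyperbolic half-plane, is parametrized by hyperbolic arclength, i.e. (σ¹)'(s)² + (σ²)'(s)² = σ²(s)² for all s ∈ ℝ, and its hyperbolic covariant acceleration A[σ] has hyperbolic norm ((A¹[σ](s))² + (A²[σ](s))²)/σ²(s)² = 4/cosh²(s) for all s ∈ ℝ; hence the hyperbolic geodesic curvature of σ has absolute value 2/cosh s. -/

import Mathlib

/-- Hyperbolic covariant acceleration, first component:
`A¹[σ] = (σ¹)'' − 2(σ¹)'(σ²)'/σ²`. -/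
noncomputable def hypAccel1 (σ1 σ2 : ℝ → ℝ) (s : ℝ) : ℝ :=
  deriv (deriv σ1) s - 2 * deriv σ1 s * deriv σ2 s / σ2 s

/-- Hyperbolic covariant acceleration, second component:
`A²[σ] = (σ²)'' + ((σ¹)'² − (σ²)'²)/σ²`. -/
noncomputable def hypAccel2 (σ1 σ2 : ℝ → ℝ) (s : ℝ) : ℝ :=
  deriv (deriv σ2) s + ((deriv σ1 s) ^ 2 - (deriv σ2 s) ^ 2) / σ2 s

/-- First component of the inverted catenoid profile curve
`σ(s) = (s, cosh s)/(s² + cosh² s)`. -/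
noncomputable def invCat1 (s : ℝ) : ℝ := s / (s ^ 2 + Real.cosh s ^ 2)

/-- Second component of the inverted catenoid profile curve. -/
noncomputable def invCat2 (s : ℝ) : ℝ := Real.cosh s / (s ^ 2 + Real.cosh s ^ 2)

lemma qpos (s : ℝ) : 0 < s ^ 2 + Real.cosh s ^ 2 := by
  nlinarith [Real.cosh_pos s, sq_nonneg s]

lemma hq (s : ℝ) :
    HasDerivAt (fun t : ℝ => t ^ 2 + Real.cosh t ^ 2)
      (2 * s + 2 * Real.cosh s * Real.sinh s) s := by
  have h1 := hasDerivAt_pow 2 s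
  have h2 := (Real.hasDerivAt_cosh s).pow 2
  have := h1.add h2
  refine this.congr_deriv ?_
  push_cast
  ring

lemma hd1 (s : ℝ) :
    HasDerivAt invCat1
      ((Real.cosh s ^ 2 - 2 * s * Real.cosh s * Real.sinh s - s ^ 2) /
        (s ^ 2 + Real.cosh s ^ 2) ^ 2) s := by
  have := (hasDerivAt_id s).div (hq s) (qpos s).ne'
  refine this.congr_deriv ?_
  simp only [id]
  field_simp
  ring

lemma hd2 (s : ℝ) :
    HasDerivAt invCat2
      ((Real.sinh s * (s ^ 2 - Real.cosh s ^ 2) - 2 * s * Real.cosh s) /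
        (s ^ 2 + Real.cosh s ^ 2) ^ 2) s := by
  have := (Real.hasDerivAt_cosh s).div (hq s) (qpos s).ne'
  refine this.congr_deriv ?_
  field_simp
  ring

lemma deriv1 : deriv invCat1 = fun s =>
    (Real.cosh s ^ 2 - 2 * s * Real.cosh s * Real.sinh s - s ^ 2) /
      (s ^ 2 + Real.cosh s ^ 2) ^ 2 :=
  funext fun s => (hd1 s).deriv

lemma deriv2 : deriv invCat2 = fun s =>
    (Real.sinh s * (s ^ 2 - Real.cosh s ^ 2) - 2 * s * Real.cosh s) /
      (s ^ 2 + Real.cosh s ^ 2) ^ 2 :=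
  funext fun s => (hd2 s).deriv

lemma hdd1 (s : ℝ) :
    HasDerivAt (fun t =>
        (Real.cosh t ^ 2 - 2 * t * Real.cosh t * Real.sinh t - t ^ 2) /
          (t ^ 2 + Real.cosh t ^ 2) ^ 2)
      ((-4 * Real.cosh s ^ 3 * Real.sinh s - 6 * s * Real.cosh s ^ 2
          + 6 * s * Real.cosh s ^ 2 * Real.sinh s ^ 2 - 2 * s * Real.cosh s ^ 4
          + 12 * s ^ 2 * Real.cosh s * Real.sinh s + 2 * s ^ 3
          - 2 * s ^ 3 * Real.sinh s ^ 2 - 2 * s ^ 3 * Real.cosh s ^ 2) /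
        (s ^ 2 + Real.cosh s ^ 2) ^ 3) s := by
  have hN : HasDerivAt (fun t : ℝ =>
      Real.cosh t ^ 2 - 2 * t * Real.cosh t * Real.sinh t - t ^ 2)
      (2 * Real.cosh s ^ 1 * Real.sinh s -
        ((2 * 1 * Real.cosh s + 2 * s * Real.sinh s) * Real.sinh s
          + 2 * s * Real.cosh s * Real.cosh s) - ↑2 * s ^ 1) s := by
    have h1 := (Real.hasDerivAt_cosh s).pow 2
    have h2 := (((hasDerivAt_id s).const_mul 2).mul (Real.hasDerivAt_cosh s)).mul
      (Real.hasDerivAt_sinh s)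
    have h3 := hasDerivAt_pow 2 s
    exact (h1.sub h2).sub h3
  have hD := (hq s).pow 2
  have := hN.div hD (pow_ne_zero 2 (qpos s).ne')
  refine this.congr_deriv ?_
  have h0 := (qpos s).ne'
  simp only [Pi.pow_apply]
  field_simp
  ring

lemma hdd2 (s : ℝ) :
    HasDerivAt (fun t =>
        (Real.sinh t * (t ^ 2 - Real.cosh t ^ 2) - 2 * t * Real.cosh t) /
          (t ^ 2 + Real.cosh t ^ 2) ^ 2)
      ((-2 * Real.cosh s ^ 3 + 2 * Real.cosh s ^ 3 * Real.sinh s ^ 2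
          - Real.cosh s ^ 5 + 12 * s * Real.cosh s ^ 2 * Real.sinh s
          + 6 * s ^ 2 * Real.cosh s - 6 * s ^ 2 * Real.cosh s * Real.sinh s ^ 2
          - 4 * s ^ 3 * Real.sinh s + s ^ 4 * Real.cosh s) /
        (s ^ 2 + Real.cosh s ^ 2) ^ 3) s := by
  have hN : HasDerivAt (fun t : ℝ =>
      Real.sinh t * (t ^ 2 - Real.cosh t ^ 2) - 2 * t * Real.cosh t)
      (Real.cosh s * (s ^ 2 - Real.cosh s ^ 2)
        + Real.sinh s * (↑2 * s ^ 1 - 2 * Real.cosh s ^ 1 * Real.sinh s)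
        - (2 * 1 * Real.cosh s + 2 * s * Real.sinh s)) s := by
    have h1 := (Real.hasDerivAt_sinh s).mul
      ((hasDerivAt_pow 2 s).sub ((Real.hasDerivAt_cosh s).pow 2))
    have h2 := ((hasDerivAt_id s).const_mul 2).mul (Real.hasDerivAt_cosh s)
    exact h1.sub h2
  have hD := (hq s).pow 2
  have := hN.div hD (pow_ne_zero 2 (qpos s).ne')
  refine this.congr_deriv ?_
  have h0 := (qpos s).ne'
  simp only [Pi.pow_apply]
  field_simp
  ring

set_option maxHeartbeats 1600000 in
/-- the inverted catenoid profile curve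
`σ(s) = (s, cosh s)/(s² + cosh² s)` takes values in the hyperbolic half-plane,
is parametrized by hyperbolic arclength, and the hyperbolic norm squared of its
hyperbolic covariant acceleration equals `4 / cosh² s`; hence its hyperbolic
geodesic curvature has absolute value `2 / cosh s`. -/
theorem inverted_catenoid_hyperbolic_curvature :
    ∀ s : ℝ,
      0 < invCat2 s ∧
      (deriv invCat1 s) ^ 2 + (deriv invCat2 s) ^ 2 = (invCat2 s) ^ 2 ∧
      ((hypAccel1 invCat1 invCat2 s) ^ 2 + (hypAccel2 invCat1 invCat2 s) ^ 2) /
          (invCat2 s) ^ 2 = 4 / Real.cosh s ^ 2 := by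
  intro s
  have hc := Real.cosh_pos s
  have hq0 := (qpos s).ne'
  have hrel : Real.cosh s ^ 2 = Real.sinh s ^ 2 + 1 := Real.cosh_sq s
  have e1 : deriv invCat1 s =
      (Real.cosh s ^ 2 - 2 * s * Real.cosh s * Real.sinh s - s ^ 2) /
        (s ^ 2 + Real.cosh s ^ 2) ^ 2 := (hd1 s).deriv
  have e2 : deriv invCat2 s =
      (Real.sinh s * (s ^ 2 - Real.cosh s ^ 2) - 2 * s * Real.cosh s) /
        (s ^ 2 + Real.cosh s ^ 2) ^ 2 := (hd2 s).deriv
  have e11 : deriv (deriv invCat1) s =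
      (-4 * Real.cosh s ^ 3 * Real.sinh s - 6 * s * Real.cosh s ^ 2
          + 6 * s * Real.cosh s ^ 2 * Real.sinh s ^ 2 - 2 * s * Real.cosh s ^ 4
          + 12 * s ^ 2 * Real.cosh s * Real.sinh s + 2 * s ^ 3
          - 2 * s ^ 3 * Real.sinh s ^ 2 - 2 * s ^ 3 * Real.cosh s ^ 2) /
        (s ^ 2 + Real.cosh s ^ 2) ^ 3 := by
    rw [deriv1]; exact (hdd1 s).deriv
  have e22 : deriv (deriv invCat2) s =
      (-2 * Real.cosh s ^ 3 + 2 * Real.cosh s ^ 3 * Real.sinh s ^ 2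
          - Real.cosh s ^ 5 + 12 * s * Real.cosh s ^ 2 * Real.sinh s
          + 6 * s ^ 2 * Real.cosh s - 6 * s ^ 2 * Real.cosh s * Real.sinh s ^ 2
          - 4 * s ^ 3 * Real.sinh s + s ^ 4 * Real.cosh s) /
        (s ^ 2 + Real.cosh s ^ 2) ^ 3 := by
    rw [deriv2]; exact (hdd2 s).deriv
  refine ⟨?_, ?_, ?_⟩
  · unfold invCat2
    exact div_pos hc (qpos s)
  · rw [e1, e2]
    unfold invCat2
    field_simp
    linear_combination ((-1) * Real.cosh s ^ 4 + (-2) * s ^ 2 * Real.cosh s ^ 2 + (-1) * s ^ 4) * hrel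
  · have hA1 : hypAccel1 invCat1 invCat2 s =
        2 * (s ^ 4 * Real.sinh s - Real.cosh s ^ 4 * Real.sinh s
          - 2 * s * Real.cosh s ^ 3 - 2 * s ^ 3 * Real.cosh s) /
          (Real.cosh s * (s ^ 2 + Real.cosh s ^ 2) ^ 3) := by
      unfold hypAccel1
      rw [e11, e1, e2]
      simp only [invCat2]
      field_simp
      linear_combination ((-2) * s ^ 1 * Real.cosh s ^ 3 + (-2) * s ^ 3 * Real.cosh s ^ 1) * hrel
    have hA2 : hypAccel2 invCat1 invCat2 s =
        2 * (s ^ 4 - Real.cosh s ^ 4 + 2 * s * Real.cosh s ^ 3 * Real.sinh s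
          + 2 * s ^ 3 * Real.cosh s * Real.sinh s) /
          (Real.cosh s * (s ^ 2 + Real.cosh s ^ 2) ^ 3) := by
      unfold hypAccel2
      rw [e22, e1, e2]
      simp only [invCat2]
      field_simp
      linear_combination ((-1) * Real.cosh s ^ 4 + (1) * s ^ 4) * hrel
    rw [hA1, hA2]
    simp only [invCat2]
    field_simp
    linear_combination ((-4) * Real.cosh s ^ 8 + (-16) * s ^ 2 * Real.cosh s ^ 6 + (-24) * s ^ 4 * Real.cosh s ^ 4 + (-16) * s ^ 6 * Real.cosh s ^ 2 + (-4) * s ^ 8) * hrel
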